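/- Assume N/4 < s < 1 and the ground state of (-Δ)^s Q + Q = Q^p is unique up to translation. Then the positive ground state solution U of (a + b‖(-Δ)^{s/2}U‖₂²)(-Δ)^s U + m U = U^p is unique up to translation. -/

import Mathlib

open MeasureTheory Real Metric
open scoped FourierTransform RealInnerProductSpace

/-- The fractional Laplacian, defined via the Fourier multiplier. -/
noncomputable def fLap (N : ℕ) (s : ℝ) (u : EuclideanSpace ℝ (Fin N) → ℝ) :
    EuclideanSpace ℝ (Fin N) → ℝ :=
  fun x => (𝓕⁻ (fun ξ => ((‖ξ‖ ^ (2 * s) : ℝ) : ℂ) * 𝓕 (fun y => (u y : ℂ)) ξ) x).re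

/-- The squared L2-norm of the s/2-fractional gradient. -/
noncomputable def gNorm (N : ℕ) (s : ℝ) (u : EuclideanSpace ℝ (Fin N) → ℝ) : ℝ :=
  ∫ x, (fLap N (s / 2) u x) ^ 2

section Aux

variable {N : ℕ}

local notation "𝔼" => EuclideanSpace ℝ (Fin N)

/-- Fourier transform of a constant multiple. -/
lemma fourier_const_mul (v : 𝔼 → ℂ) (c : ℂ) (ξ : 𝔼) :
    𝓕 (fun y => c * v y) ξ = c * 𝓕 v ξ := by
  rw [Real.fourier_eq', Real.fourier_eq']
  simp only [smul_eq_mul]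
  rw [← integral_const_mul]
  congr 1; ext w; ring

/-- Fourier transform of a translate. -/
lemma fourier_translate (u : 𝔼 → ℂ) (t ξ : 𝔼) :
    𝓕 (fun y => u (y - t)) ξ
      = Complex.exp (((-2 * π * ⟪t, ξ⟫ : ℝ) : ℂ) * Complex.I) * 𝓕 u ξ := by
  rw [Real.fourier_eq', Real.fourier_eq']
  simp only [smul_eq_mul]
  calc (∫ v, Complex.exp (((-2 * π * ⟪v, ξ⟫ : ℝ) : ℂ) * Complex.I) * u (v - t))
      = ∫ v, (fun w => Complex.exp (((-2 * π * ⟪w + t, ξ⟫ : ℝ) : ℂ) * Complex.I) * u w)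
          (v - t) := by
        congr 1; ext v; simp only [sub_add_cancel]
    _ = ∫ w, Complex.exp (((-2 * π * ⟪w + t, ξ⟫ : ℝ) : ℂ) * Complex.I) * u w := by
        exact integral_sub_right_eq_self
          (fun w => Complex.exp (((-2 * π * ⟪w + t, ξ⟫ : ℝ) : ℂ) * Complex.I) * u w) t
    _ = ∫ w, Complex.exp (((-2 * π * ⟪t, ξ⟫ : ℝ) : ℂ) * Complex.I) *
          (Complex.exp (((-2 * π * ⟪w, ξ⟫ : ℝ) : ℂ) * Complex.I) * u w) := by
        congr 1; ext w
        rw [inner_add_left, ← mul_assoc, ← Complex.exp_add]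
        congr 2
        push_cast
        ring
    _ = _ := by rw [integral_const_mul]

/-- Fourier transform of a dilate. -/
lemma fourier_scale (u : 𝔼 → ℂ) {lam : ℝ} (hlam : 0 < lam) (ξ : 𝔼) :
    𝓕 (fun y => u (lam • y)) ξ = (((lam ^ N : ℝ)⁻¹ : ℝ) : ℂ) * 𝓕 u (lam⁻¹ • ξ) := by
  rw [Real.fourier_eq', Real.fourier_eq']
  simp only [smul_eq_mul]
  have hsub := Measure.integral_comp_smul (volume : Measure 𝔼)
    (fun w => Complex.exp (((-2 * π * ⟪w, lam⁻¹ • ξ⟫ : ℝ) : ℂ) * Complex.I) * u w) lam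
  rw [finrank_euclideanSpace_fin] at hsub
  have hptw : ∀ v : 𝔼, Complex.exp (((-2 * π * ⟪v, ξ⟫ : ℝ) : ℂ) * Complex.I) * u (lam • v)
      = Complex.exp (((-2 * π * ⟪lam • v, lam⁻¹ • ξ⟫ : ℝ) : ℂ) * Complex.I) * u (lam • v) := by
    intro v
    rw [show (⟪lam • v, lam⁻¹ • ξ⟫ : ℝ) = ⟪v, ξ⟫ by
      rw [real_inner_smul_left, real_inner_smul_right, ← mul_assoc,
        mul_inv_cancel₀ hlam.ne', one_mul]]
  calc (∫ v, Complex.exp (((-2 * π * ⟪v, ξ⟫ : ℝ) : ℂ) * Complex.I) * u (lam • v))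
      = ∫ v, Complex.exp (((-2 * π * ⟪lam • v, lam⁻¹ • ξ⟫ : ℝ) : ℂ) * Complex.I) *
          u (lam • v) := integral_congr_ae (Filter.Eventually.of_forall hptw)
    _ = |(lam ^ N)⁻¹| •
          ∫ w, Complex.exp (((-2 * π * ⟪w, lam⁻¹ • ξ⟫ : ℝ) : ℂ) * Complex.I) * u w := hsub
    _ = _ := by
        rw [abs_of_pos (by positivity), Complex.real_smul]

/-- fLap of a translate. -/
lemma fLap_translate (σ : ℝ) (u : 𝔼 → ℝ) (t x : 𝔼) :
    fLap N σ (fun y => u (y - t)) x = fLap N σ u (x - t) := by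
  unfold fLap
  congr 1
  have h1 : (fun ξ : 𝔼 => ((‖ξ‖ ^ (2 * σ) : ℝ) : ℂ) * 𝓕 (fun y => ((u (y - t) : ℝ) : ℂ)) ξ)
      = fun ξ => ((‖ξ‖ ^ (2 * σ) : ℝ) : ℂ) *
          (Complex.exp (((-2 * π * ⟪t, ξ⟫ : ℝ) : ℂ) * Complex.I) *
            𝓕 (fun y => ((u y : ℝ) : ℂ)) ξ) := by
    ext ξ
    rw [fourier_translate (fun y => ((u y : ℝ) : ℂ)) t ξ]
  rw [h1, Real.fourierInv_eq', Real.fourierInv_eq']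
  simp only [smul_eq_mul]
  congr 1; ext ξ
  have h2 : Complex.exp (((2 * π * ⟪ξ, x - t⟫ : ℝ) : ℂ) * Complex.I)
      = Complex.exp (((2 * π * ⟪ξ, x⟫ : ℝ) : ℂ) * Complex.I) *
        Complex.exp (((-2 * π * ⟪t, ξ⟫ : ℝ) : ℂ) * Complex.I) := by
    rw [← Complex.exp_add]
    congr 1
    rw [inner_sub_right, real_inner_comm t ξ]
    push_cast
    ring
  rw [h2]
  ring

/-- fLap of a dilate with amplitude. -/
lemma fLap_scale (σ c : ℝ) {lam : ℝ} (hlam : 0 < lam) (u : 𝔼 → ℝ) (x : 𝔼) :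
    fLap N σ (fun y => c * u (lam • y)) x = c * lam ^ (2 * σ) * fLap N σ u (lam • x) := by
  have hlamN : (0 : ℝ) < lam ^ N := by positivity
  have hl2σ : (0 : ℝ) < lam ^ (2 * σ) := Real.rpow_pos_of_pos hlam _
  unfold fLap
  have hF : (fun ξ : 𝔼 => ((‖ξ‖ ^ (2 * σ) : ℝ) : ℂ) *
        𝓕 (fun y => ((c * u (lam • y) : ℝ) : ℂ)) ξ)
      = fun ξ => ((‖ξ‖ ^ (2 * σ) : ℝ) : ℂ) *
          (((c : ℝ) : ℂ) * ((((lam ^ N : ℝ)⁻¹ : ℝ) : ℂ) *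
            𝓕 (fun y => ((u y : ℝ) : ℂ)) (lam⁻¹ • ξ))) := by
    ext ξ
    have h1 : (fun y : 𝔼 => ((c * u (lam • y) : ℝ) : ℂ))
        = fun y => ((c : ℝ) : ℂ) * (fun z : 𝔼 => ((u z : ℝ) : ℂ)) (lam • y) := by
      ext y; push_cast; ring
    rw [h1, fourier_const_mul (fun y => (fun z : 𝔼 => ((u z : ℝ) : ℂ)) (lam • y)) _ ξ,
      fourier_scale (fun z : 𝔼 => ((u z : ℝ) : ℂ)) hlam ξ]
  rw [hF]
  rw [Real.fourierInv_eq', Real.fourierInv_eq']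
  simp only [smul_eq_mul]
  -- pull the constant out of the LHS integral
  have hL : (∫ ξ, Complex.exp (((2 * π * ⟪ξ, x⟫ : ℝ) : ℂ) * Complex.I) *
        (((‖ξ‖ ^ (2 * σ) : ℝ) : ℂ) * (((c : ℝ) : ℂ) * ((((lam ^ N : ℝ)⁻¹ : ℝ) : ℂ) *
          𝓕 (fun y => ((u y : ℝ) : ℂ)) (lam⁻¹ • ξ)))))
      = ((c * (lam ^ N : ℝ)⁻¹ : ℝ) : ℂ) *
        ∫ ξ, Complex.exp (((2 * π * ⟪ξ, x⟫ : ℝ) : ℂ) * Complex.I) *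
          (((‖ξ‖ ^ (2 * σ) : ℝ) : ℂ) * 𝓕 (fun y => ((u y : ℝ) : ℂ)) (lam⁻¹ • ξ)) := by
    rw [← integral_const_mul]
    congr 1; ext ξ; push_cast; ring
  rw [hL]
  -- substitute in the RHS integral
  have hsub := Measure.integral_comp_smul (volume : Measure 𝔼)
    (fun η => Complex.exp (((2 * π * ⟪η, lam • x⟫ : ℝ) : ℂ) * Complex.I) *
      (((‖η‖ ^ (2 * σ) : ℝ) : ℂ) * 𝓕 (fun y => ((u y : ℝ) : ℂ)) η)) lam⁻¹
  rw [finrank_euclideanSpace_fin] at hsub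
  have habs : |((lam⁻¹) ^ N)⁻¹| = (lam ^ N : ℝ) := by
    rw [inv_pow, inv_inv, abs_of_pos hlamN]
  rw [habs] at hsub
  have hR : (∫ η, Complex.exp (((2 * π * ⟪η, lam • x⟫ : ℝ) : ℂ) * Complex.I) *
        (((‖η‖ ^ (2 * σ) : ℝ) : ℂ) * 𝓕 (fun y => ((u y : ℝ) : ℂ)) η))
      = (((lam ^ N : ℝ)⁻¹ * (lam ^ (2 * σ))⁻¹ : ℝ) : ℂ) *
        ∫ ξ, Complex.exp (((2 * π * ⟪ξ, x⟫ : ℝ) : ℂ) * Complex.I) *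
          (((‖ξ‖ ^ (2 * σ) : ℝ) : ℂ) * 𝓕 (fun y => ((u y : ℝ) : ℂ)) (lam⁻¹ • ξ)) := by
    have hint : ∫ η, Complex.exp (((2 * π * ⟪η, lam • x⟫ : ℝ) : ℂ) * Complex.I) *
          (((‖η‖ ^ (2 * σ) : ℝ) : ℂ) * 𝓕 (fun y => ((u y : ℝ) : ℂ)) η)
        = ((lam ^ N : ℝ)⁻¹ : ℝ) •
          ∫ ξ, Complex.exp (((2 * π * ⟪lam⁻¹ • ξ, lam • x⟫ : ℝ) : ℂ) * Complex.I) *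
            (((‖lam⁻¹ • ξ‖ ^ (2 * σ) : ℝ) : ℂ) *
              𝓕 (fun y => ((u y : ℝ) : ℂ)) (lam⁻¹ • ξ)) := by
      rw [hsub, smul_smul, inv_mul_cancel₀ hlamN.ne', one_smul]
    rw [hint]
    have hptw : ∀ ξ : 𝔼, Complex.exp (((2 * π * ⟪lam⁻¹ • ξ, lam • x⟫ : ℝ) : ℂ) * Complex.I) *
          (((‖lam⁻¹ • ξ‖ ^ (2 * σ) : ℝ) : ℂ) * 𝓕 (fun y => ((u y : ℝ) : ℂ)) (lam⁻¹ • ξ))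
        = (((lam ^ (2 * σ))⁻¹ : ℝ) : ℂ) *
          (Complex.exp (((2 * π * ⟪ξ, x⟫ : ℝ) : ℂ) * Complex.I) *
            (((‖ξ‖ ^ (2 * σ) : ℝ) : ℂ) * 𝓕 (fun y => ((u y : ℝ) : ℂ)) (lam⁻¹ • ξ))) := by
      intro ξ
      have hin : ⟪lam⁻¹ • ξ, lam • x⟫ = ⟪ξ, x⟫ := by
        rw [real_inner_smul_left, real_inner_smul_right, ← mul_assoc,
          inv_mul_cancel₀ hlam.ne', one_mul]
      have hnrm : ‖lam⁻¹ • ξ‖ ^ (2 * σ) = (lam ^ (2 * σ))⁻¹ * ‖ξ‖ ^ (2 * σ) := by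
        rw [norm_smul, Real.norm_eq_abs, abs_of_pos (inv_pos.mpr hlam),
          Real.mul_rpow (inv_pos.mpr hlam).le (norm_nonneg ξ), Real.inv_rpow hlam.le]
      rw [hin, hnrm]
      push_cast
      ring
    rw [integral_congr_ae (Filter.Eventually.of_forall hptw), integral_const_mul,
      Complex.real_smul]
    push_cast
    ring
  rw [hR]
  simp only [Complex.re_ofReal_mul]
  have hfin : ∀ Z : ℝ, c * (lam ^ N : ℝ)⁻¹ * Z
      = c * lam ^ (2 * σ) * ((lam ^ N : ℝ)⁻¹ * (lam ^ (2 * σ))⁻¹ * Z) := by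
    intro Z
    field_simp
  exact hfin _

lemma gNorm_translate (s : ℝ) (u : 𝔼 → ℝ) (t : 𝔼) :
    gNorm N s (fun y => u (y - t)) = gNorm N s u := by
  unfold gNorm
  have h : ∀ x : 𝔼, fLap N (s / 2) (fun y => u (y - t)) x = fLap N (s / 2) u (x - t) :=
    fLap_translate (s / 2) u t
  simp_rw [h]
  exact integral_sub_right_eq_self (fun x => fLap N (s / 2) u x ^ 2) t

lemma gNorm_scale (s c : ℝ) {lam : ℝ} (hlam : 0 < lam) (u : 𝔼 → ℝ) :
    gNorm N s (fun y => c * u (lam • y))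
      = c ^ 2 * lam ^ (2 * s) * ((lam ^ N : ℝ))⁻¹ * gNorm N s u := by
  unfold gNorm
  have h : ∀ x : 𝔼, fLap N (s / 2) (fun y => c * u (lam • y)) x
      = c * lam ^ (2 * (s / 2)) * fLap N (s / 2) u (lam • x) := fLap_scale (s / 2) c hlam u
  simp_rw [h, mul_pow]
  rw [integral_const_mul]
  have hcs := Measure.integral_comp_smul (volume : Measure 𝔼)
    (fun x => fLap N (s / 2) u x ^ 2) lam
  rw [finrank_euclideanSpace_fin] at hcs
  rw [hcs, abs_of_pos (by positivity : (0:ℝ) < (lam ^ N)⁻¹), smul_eq_mul]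
  have he : 2 * (s / 2) = s := by ring
  rw [he]
  have h2 : (lam ^ s) ^ 2 = lam ^ (2 * s) := by
    rw [← Real.rpow_natCast (lam ^ s) 2, ← Real.rpow_mul hlam.le]
    norm_num
    rw [mul_comm]
  rw [h2]
  ring

lemma gNorm_nonneg (s : ℝ) (u : 𝔼 → ℝ) : 0 ≤ gNorm N s u :=
  integral_nonneg fun x => sq_nonneg _

/-- Any positive solution of the Kirchhoff equation rescales to a solution of the Q-equation. -/
lemma Qsol {s a b m p : ℝ} (hs0 : 0 < s) (hb : 0 < b) (hm : 0 < m)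
    (hp1 : 1 < p) (ha : 0 < a) (U : 𝔼 → ℝ) (hpos : ∀ x, 0 < U x)
    (heq : ∀ x, (a + b * gNorm N s U) * fLap N s U x + m * U x = U x ^ p) (x : 𝔼) :
    fLap N s (fun y => m ^ (-(1 / (p - 1))) *
        U (((a + b * gNorm N s U) / m) ^ (1 / (2 * s)) • y)) x
      + (m ^ (-(1 / (p - 1))) * U (((a + b * gNorm N s U) / m) ^ (1 / (2 * s)) • x))
      = (m ^ (-(1 / (p - 1))) * U (((a + b * gNorm N s U) / m) ^ (1 / (2 * s)) • x)) ^ p := by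
  have hE : 0 < a + b * gNorm N s U :=
    lt_of_lt_of_le ha (le_add_of_nonneg_right (mul_nonneg hb.le (gNorm_nonneg s U)))
  set E : ℝ := a + b * gNorm N s U with hEdef
  have h2s : (0 : ℝ) < 2 * s := by linarith
  set l : ℝ := (E / m) ^ (1 / (2 * s)) with hldef
  have hl : 0 < l := Real.rpow_pos_of_pos (div_pos hE hm) _
  have hlpow : l ^ (2 * s) = E / m := by
    rw [hldef, ← Real.rpow_mul (div_pos hE hm).le, one_div, inv_mul_cancel₀ h2s.ne',
      Real.rpow_one]
  set c : ℝ := m ^ (-(1 / (p - 1))) with hcdef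
  have hc : 0 < c := Real.rpow_pos_of_pos hm _
  have hp0 : p - 1 ≠ 0 := by intro h; linarith [hp1]
  have hcp : c ^ p = c / m := by
    have hexp : (-(1 / (p - 1))) * p = -(1 / (p - 1)) - 1 := by
      field_simp
      ring
    rw [hcdef, ← Real.rpow_mul hm.le, hexp, Real.rpow_sub hm, Real.rpow_one]
  rw [fLap_scale s c hl U x]
  have hz := heq (l • x)
  have hUz := hpos (l • x)
  have hmul : (c * U (l • x)) ^ p = c ^ p * U (l • x) ^ p := Real.mul_rpow hc.le hUz.le
  rw [hmul, hcp, hlpow]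
  have hfl : fLap N s U (l • x) = (U (l • x) ^ p - m * U (l • x)) / E := by
    rw [eq_div_iff hE.ne']
    linarith [hz]
  rw [hfl]
  field_simp
  ring

lemma phi_lt {a μ e e' : ℝ} (ha : 0 < a) (hμ : -1 < μ) (hae : a ≤ e) (hee' : e < e') :
    e ^ μ * (e - a) < e' ^ μ * (e' - a) := by
  have he : 0 < e := lt_of_lt_of_le ha hae
  have he' : 0 < e' := he.trans hee'
  rcases le_or_gt μ 0 with hμ0 | hμ0
  · have h1 : e ^ μ * (e - a) = e ^ (μ + 1) - a * e ^ μ := by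
      rw [Real.rpow_add he, Real.rpow_one]; ring
    have h2 : e' ^ μ * (e' - a) = e' ^ (μ + 1) - a * e' ^ μ := by
      rw [Real.rpow_add he', Real.rpow_one]; ring
    rw [h1, h2]
    have hA : e ^ (μ + 1) < e' ^ (μ + 1) := Real.rpow_lt_rpow he.le hee' (by linarith)
    have hB : e' ^ μ ≤ e ^ μ := Real.rpow_le_rpow_of_nonpos he hee'.le hμ0
    nlinarith
  · rcases eq_or_lt_of_le hae with rfl | h
    · have h0 : 0 < e' ^ μ * (e' - a) := mul_pos (Real.rpow_pos_of_pos he' μ) (by linarith)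
      simpa using h0
    · exact mul_lt_mul'' (Real.rpow_lt_rpow he.le hee' hμ0) (by linarith)
        (Real.rpow_pos_of_pos he μ).le (by linarith)

end Aux

theorem kirchhoff_unique_up_to_translation (N : ℕ) (s a b m p : ℝ) (hN : 1 ≤ N)
    (hs1 : (N : ℝ) / 4 < s) (hs2 : s < 1) (ha : 0 < a) (hb : 0 < b) (hm : 0 < m)
    (hp1 : 1 < p) (hp2 : p < 2 * N / ((N : ℝ) - 2 * s) - 1)
    (huniq : ∀ Q₁ Q₂ : EuclideanSpace ℝ (Fin N) → ℝ,
      Integrable Q₁ → Integrable Q₂ → (∀ x, 0 < Q₁ x) → (∀ x, 0 < Q₂ x) →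
      (∀ x, fLap N s Q₁ x + Q₁ x = Q₁ x ^ p) →
      (∀ x, fLap N s Q₂ x + Q₂ x = Q₂ x ^ p) →
      ∃ y, ∀ x, Q₂ x = Q₁ (x - y))
    (U₁ U₂ : EuclideanSpace ℝ (Fin N) → ℝ)
    (h₁int : Integrable U₁) (h₂int : Integrable U₂)
    (h₁pos : ∀ x, 0 < U₁ x) (h₂pos : ∀ x, 0 < U₂ x)
    (h₁ : ∀ x, (a + b * gNorm N s U₁) * fLap N s U₁ x + m * U₁ x = U₁ x ^ p)
    (h₂ : ∀ x, (a + b * gNorm N s U₂) * fLap N s U₂ x + m * U₂ x = U₂ x ^ p) :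
    ∃ y, ∀ x, U₂ x = U₁ (x - y) := by
  have hs0 : 0 < s := lt_of_le_of_lt (by positivity) hs1
  have h2s : (0 : ℝ) < 2 * s := by linarith
  have hc : (0 : ℝ) < m ^ (-(1 / (p - 1))) := Real.rpow_pos_of_pos hm _
  set c : ℝ := m ^ (-(1 / (p - 1))) with hcdef
  have hE₁a : a ≤ a + b * gNorm N s U₁ :=
    le_add_of_nonneg_right (mul_nonneg hb.le (gNorm_nonneg s U₁))
  have hE₂a : a ≤ a + b * gNorm N s U₂ :=
    le_add_of_nonneg_right (mul_nonneg hb.le (gNorm_nonneg s U₂))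
  set E₁ : ℝ := a + b * gNorm N s U₁ with hE₁def
  set E₂ : ℝ := a + b * gNorm N s U₂ with hE₂def
  have hE₁ : 0 < E₁ := lt_of_lt_of_le ha hE₁a
  have hE₂ : 0 < E₂ := lt_of_lt_of_le ha hE₂a
  set l₁ : ℝ := (E₁ / m) ^ (1 / (2 * s)) with hl₁def
  set l₂ : ℝ := (E₂ / m) ^ (1 / (2 * s)) with hl₂def
  have hl₁ : 0 < l₁ := Real.rpow_pos_of_pos (div_pos hE₁ hm) _
  have hl₂ : 0 < l₂ := Real.rpow_pos_of_pos (div_pos hE₂ hm) _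
  obtain ⟨y, hy⟩ := huniq (fun x => c * U₁ (l₁ • x)) (fun x => c * U₂ (l₂ • x))
    ((h₁int.comp_smul hl₁.ne').const_mul c) ((h₂int.comp_smul hl₂.ne').const_mul c)
    (fun x => mul_pos hc (h₁pos _)) (fun x => mul_pos hc (h₂pos _))
    (Qsol hs0 hb hm hp1 ha U₁ h₁pos h₁) (Qsol hs0 hb hm hp1 ha U₂ h₂pos h₂)
  have hy' : ∀ x, c * U₂ (l₂ • x) = c * U₁ (l₁ • (x - y)) := fun x => hy x
  -- compare gNorms of the two rescaled ground states
  have hgQ : gNorm N s (fun x => c * U₂ (l₂ • x)) = gNorm N s (fun x => c * U₁ (l₁ • x)) := by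
    have hfun : (fun x => c * U₂ (l₂ • x))
        = fun x => (fun z => c * U₁ (l₁ • z)) (x - y) := funext hy
    have ht := gNorm_translate (N := N) s (fun z => c * U₁ (l₁ • z)) y
    rw [hfun]
    exact ht
  rw [gNorm_scale s c hl₂ U₂, gNorm_scale s c hl₁ U₁] at hgQ
  -- the scaling exponent
  set μr : ℝ := 1 - (N : ℝ) / (2 * s) with hμdef
  have hμ : (-1 : ℝ) < μr := by
    have h4 : (N : ℝ) < 4 * s := by linarith
    have : (N : ℝ) / (2 * s) < 2 := by rw [div_lt_iff₀ h2s]; linarith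
    rw [hμdef]; linarith
  have hfac : ∀ e : ℝ, 0 < e →
      ((e / m) ^ (1 / (2 * s))) ^ (2 * s) * ((((e / m) ^ (1 / (2 * s))) ^ N : ℝ))⁻¹
        = (e / m) ^ μr := by
    intro e he
    have hem : 0 < e / m := div_pos he hm
    rw [← Real.rpow_natCast ((e / m) ^ (1 / (2 * s))) N, ← Real.rpow_mul hem.le,
      ← Real.rpow_mul hem.le, ← Real.rpow_neg hem.le, ← Real.rpow_add hem]
    rw [hμdef]
    congr 1
    field_simp
    ring
  have h₁f : l₁ ^ (2 * s) * ((l₁ ^ N : ℝ))⁻¹ = (E₁ / m) ^ μr := by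
    rw [hl₁def]; exact hfac E₁ hE₁
  have h₂f : l₂ ^ (2 * s) * ((l₂ ^ N : ℝ))⁻¹ = (E₂ / m) ^ μr := by
    rw [hl₂def]; exact hfac E₂ hE₂
  -- express the gNorms in terms of E₁, E₂
  have hG₁' : gNorm N s U₁ = (E₁ - a) / b := by
    rw [eq_div_iff hb.ne']; rw [hE₁def]; ring
  have hG₂' : gNorm N s U₂ = (E₂ - a) / b := by
    rw [eq_div_iff hb.ne']; rw [hE₂def]; ring
  have hmr : (0 : ℝ) < m ^ μr := Real.rpow_pos_of_pos hm _
  have hgQ' : c ^ 2 * (E₂ ^ μr / m ^ μr) * ((E₂ - a) / b)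
      = c ^ 2 * (E₁ ^ μr / m ^ μr) * ((E₁ - a) / b) := by
    rw [← Real.div_rpow hE₂.le hm.le, ← Real.div_rpow hE₁.le hm.le, ← h₂f, ← h₁f,
      ← hG₂', ← hG₁']
    linear_combination hgQ
  have hφ : E₂ ^ μr * (E₂ - a) = E₁ ^ μr * (E₁ - a) := by
    have hcan : c ^ 2 * (E₂ ^ μr * (E₂ - a)) = c ^ 2 * (E₁ ^ μr * (E₁ - a)) := by
      field_simp at hgQ'
      linear_combination c ^ 2 * hgQ'
    exact mul_left_cancel₀ (by positivity) hcan
  have hE : E₁ = E₂ := by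
    rcases lt_trichotomy E₁ E₂ with h | h | h
    · have hlt := phi_lt ha hμ hE₁a h
      linarith
    · exact h
    · have hlt := phi_lt ha hμ hE₂a h
      linarith
  have hll : l₂ = l₁ := by rw [hl₂def, hl₁def, hE]
  refine ⟨l₁ • y, fun z => ?_⟩
  have hz := hy' (l₁⁻¹ • z)
  rw [hll, smul_smul, mul_inv_cancel₀ hl₁.ne', one_smul, smul_sub, smul_smul,
    mul_inv_cancel₀ hl₁.ne', one_smul] at hz
  exact mul_left_cancel₀ hc.ne' hz
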